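/- Let $\theta\in[0,1/2)$ and let $e,e',g,g',S\in\mathbb{R}^d$ satisfy $\langle e,g\rangle\le 0$, $\langle e',g'\rangle\le 0$, and $e'=e+S+\theta g+(1-\theta)g'$. Then $|e'|^2\le|e|^2+2\langle e,S\rangle+\Big(1+\frac{\theta^2}{1-2\theta}\Big)|S|^2+(1-\theta)^2\big(|g|^2-|g'|^2\big)$. -/

import Mathlib

open scoped RealInnerProductSpace

set_option maxHeartbeats 1000000 in
theorem stmt_15 {d : ℕ} (θ : ℝ) (hθ : θ ∈ Set.Ico (0 : ℝ) (1 / 2))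
    (e e' g g' S : EuclideanSpace ℝ (Fin d))
    (heg : ⟪e, g⟫ ≤ 0) (heg' : ⟪e', g'⟫ ≤ 0)
    (hrec : e' = e + S + θ • g + (1 - θ) • g') :
    ‖e'‖ ^ 2 ≤ ‖e‖ ^ 2 + 2 * ⟪e, S⟫ + (1 + θ ^ 2 / (1 - 2 * θ)) * ‖S‖ ^ 2
      + (1 - θ) ^ 2 * (‖g‖ ^ 2 - ‖g'‖ ^ 2) := by
  obtain ⟨hθ0, hθ2⟩ := hθ
  have h12 : (0:ℝ) < 1 - 2 * θ := by linarith
  have hne : ⟪e', e'⟫ = ‖e'‖ ^ 2 := real_inner_self_eq_norm_sq e'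
  have hne0 : ⟪e, e⟫ = ‖e‖ ^ 2 := real_inner_self_eq_norm_sq e
  have hnS : ⟪S, S⟫ = ‖S‖ ^ 2 := real_inner_self_eq_norm_sq S
  have hng : ⟪g, g⟫ = ‖g‖ ^ 2 := real_inner_self_eq_norm_sq g
  have hng' : ⟪g', g'⟫ = ‖g'‖ ^ 2 := real_inner_self_eq_norm_sq g'
  have hexp : ⟪e', e'⟫ = ⟪e, e⟫ + ⟪S, S⟫ + θ ^ 2 * ⟪g, g⟫ + (1 - θ) ^ 2 * ⟪g', g'⟫
      + 2 * ⟪e, S⟫ + 2 * θ * ⟪e, g⟫ + 2 * (1 - θ) * ⟪e, g'⟫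
      + 2 * θ * ⟪S, g⟫ + 2 * (1 - θ) * ⟪S, g'⟫ + 2 * θ * (1 - θ) * ⟪g, g'⟫ := by
    rw [hrec]
    simp only [inner_add_left, inner_add_right, real_inner_smul_left, real_inner_smul_right,
      real_inner_comm e S, real_inner_comm e g, real_inner_comm e g',
      real_inner_comm S g, real_inner_comm S g', real_inner_comm g g']
    ring
  have hexp' : ⟪e', g'⟫ = ⟪e, g'⟫ + ⟪S, g'⟫ + θ * ⟪g, g'⟫ + (1 - θ) * ⟪g', g'⟫ := by
    rw [hrec]
    simp only [inner_add_left, real_inner_smul_left]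
  -- AM-GM bound: 2θ⟪S,g⟫ ≤ (1-2θ)‖g‖² + θ²/(1-2θ)‖S‖²
  have hcs : ⟪S, g⟫ ≤ ‖S‖ * ‖g‖ := real_inner_le_norm S g
  have hamgm : 2 * θ * ⟪S, g⟫ ≤ (1 - 2 * θ) * ‖g‖ ^ 2 + θ ^ 2 / (1 - 2 * θ) * ‖S‖ ^ 2 := by
    have hsq : 0 ≤ ((1 - 2 * θ) * ‖g‖ - θ * ‖S‖) ^ 2 := sq_nonneg _
    have h2 : 2 * θ * ⟪S, g⟫ ≤ 2 * θ * (‖S‖ * ‖g‖) := by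
      nlinarith [hcs, hθ0]
    have hd : θ ^ 2 / (1 - 2 * θ) * ‖S‖ ^ 2 * (1 - 2 * θ) = θ ^ 2 * ‖S‖ ^ 2 := by
      rw [div_mul_eq_mul_div, div_mul_eq_mul_div, div_eq_iff h12.ne']
    nlinarith [hsq, h2, h12, hd]
  have heq : ‖e'‖ ^ 2 = ‖e‖ ^ 2 + ‖S‖ ^ 2 + θ ^ 2 * ‖g‖ ^ 2 - (1 - θ) ^ 2 * ‖g'‖ ^ 2
      + 2 * ⟪e, S⟫ + 2 * θ * ⟪e, g⟫ + 2 * θ * ⟪S, g⟫ + 2 * (1 - θ) * ⟪e', g'⟫ := by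
    rw [← hne, ← hne0, ← hnS, ← hng, ← hng']
    linear_combination hexp - (2 * (1 - θ)) * hexp'
  have h3 : 2 * θ * ⟪e, g⟫ ≤ 0 := by nlinarith [hθ0, heg]
  have h4 : 2 * (1 - θ) * ⟪e', g'⟫ ≤ 0 := by nlinarith [heg', hθ2]
  have hid1 : θ ^ 2 * ‖g‖ ^ 2 + (1 - 2 * θ) * ‖g‖ ^ 2 = (1 - θ) ^ 2 * ‖g‖ ^ 2 := by ring
  have hid2 : (1 + θ ^ 2 / (1 - 2 * θ)) * ‖S‖ ^ 2 = ‖S‖ ^ 2 + θ ^ 2 / (1 - 2 * θ) * ‖S‖ ^ 2 := by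
    ring
  have hid3 : (1 - θ) ^ 2 * (‖g‖ ^ 2 - ‖g'‖ ^ 2)
      = (1 - θ) ^ 2 * ‖g‖ ^ 2 - (1 - θ) ^ 2 * ‖g'‖ ^ 2 := by ring
  linarith [heq, hamgm, h3, h4, hid1, hid2, hid3]
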